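/- Let C be the multiplicative group of positive-real-valued differentiable functions on [0,1]. Let y₁,…,y_m ∈ C, and for each t let P_t(x) = Σ_{s=0}^{d_t} z_{t,s} x^s be a polynomial with nonnegative real coefficients, z_{t,0} = z_{t,d_t} = 1. Suppose Σ_{t=1}^m y_t ∧ P_t(y_t) = 0 in the exterior square ⋀²C. Then u ↦ Σ_{t=1}^m L̃_t(y_t(u)) is constant on [0,1], where L̃_t(x) = (1/2)∫₀ˣ (log P_t(y)/y - log(y)·P_t'(y)/P_t(y)) dy. -/

import Mathlib

open MeasureTheory Real TensorProduct Polynomial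

/-- The Rogers dilogarithm of higher degree associated with a polynomial `P`:
`L̃(x) = (1/2)∫₀ˣ (log P(y)/y - log(y)·P'(y)/P(y)) dy`. -/
noncomputable def Ltil (P : Polynomial ℝ) (x : ℝ) : ℝ :=
  (1/2) * ∫ y in (0:ℝ)..x,
    (Real.log (P.eval y) / y - Real.log y * P.derivative.eval y / P.eval y)

/-- The multiplicative abelian group of positive-valued differentiable real functions. -/
def PD : Type := {f : ℝ → ℝ // (∀ x, 0 < f x) ∧ Differentiable ℝ f}

noncomputable instance : CommGroup PD where
  mul f g := ⟨fun x => f.1 x * g.1 x,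
    fun x => mul_pos (f.2.1 x) (g.2.1 x), f.2.2.mul g.2.2⟩
  one := ⟨fun _ => 1, fun _ => one_pos, differentiable_const 1⟩
  inv f := ⟨fun x => (f.1 x)⁻¹,
    fun x => inv_pos.2 (f.2.1 x), f.2.2.inv fun x => (f.2.1 x).ne'⟩
  mul_assoc a b c := Subtype.ext (funext fun x => mul_assoc _ _ _)
  one_mul a := Subtype.ext (funext fun x => one_mul _)
  mul_one a := Subtype.ext (funext fun x => mul_one _)
  inv_mul_cancel a := Subtype.ext (funext fun x => inv_mul_cancel₀ (a.2.1 x).ne')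
  mul_comm a b := Subtype.ext (funext fun x => mul_comm _ _)

/-- The symmetric subgroup `S²C` of `C ⊗ C`. -/
noncomputable def SymSub : AddSubgroup (TensorProduct ℤ (Additive PD) (Additive PD)) :=
  AddSubgroup.closure {t | ∃ a b : Additive PD, t = a ⊗ₜ[ℤ] b + b ⊗ₜ[ℤ] a}

/-! ### Auxiliary algebraic part -/

/-- The antisymmetric "wedge evaluation" at a point `u`. -/
noncomputable def Bu (u : ℝ) (f g : PD) : ℝ :=
  Real.log (g.1 u) * (deriv f.1 u / f.1 u) - Real.log (f.1 u) * (deriv g.1 u / g.1 u)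

lemma PD_mul_apply (f g : PD) (x : ℝ) : (f * g).1 x = f.1 x * g.1 x := rfl

lemma logd_mul (u : ℝ) (f g : PD) :
    deriv (f * g).1 u / (f * g).1 u = deriv f.1 u / f.1 u + deriv g.1 u / g.1 u := by
  have hdf := f.2.2 u
  have hdg := g.2.2 u
  have h1 : deriv (f * g).1 u = deriv f.1 u * g.1 u + f.1 u * deriv g.1 u := by
    have : (f * g).1 = fun x => f.1 x * g.1 x := rfl
    rw [this, deriv_fun_mul hdf hdg]
  rw [h1, PD_mul_apply]
  field_simp [(f.2.1 u).ne', (g.2.1 u).ne']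

lemma logv_mul (u : ℝ) (f g : PD) :
    Real.log ((f * g).1 u) = Real.log (f.1 u) + Real.log (g.1 u) := by
  rw [PD_mul_apply]; exact Real.log_mul (f.2.1 u).ne' (g.2.1 u).ne'

lemma Bu_add_left (u : ℝ) (f g h : PD) : Bu u (f * g) h = Bu u f h + Bu u g h := by
  unfold Bu; rw [logd_mul, logv_mul]; ring

lemma Bu_add_right (u : ℝ) (f g h : PD) : Bu u f (g * h) = Bu u f g + Bu u f h := by
  unfold Bu; rw [logd_mul, logv_mul]; ring

/-- `Bu u` as a biadditive map. -/
noncomputable def BuHom (u : ℝ) : Additive PD →+ Additive PD →+ ℝ :=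
  AddMonoidHom.mk'
    (fun f => AddMonoidHom.mk' (fun g => Bu u f.toMul g.toMul)
      (fun g h => Bu_add_right u f.toMul g.toMul h.toMul))
    (fun f g => AddMonoidHom.ext fun h => Bu_add_left u f.toMul g.toMul h.toMul)

lemma BuHom_apply (u : ℝ) (f g : PD) :
    BuHom u (Additive.ofMul f) (Additive.ofMul g) = Bu u f g := rfl

/-- The induced map on the tensor square. -/
noncomputable def phiB (u : ℝ) : TensorProduct ℤ (Additive PD) (Additive PD) →+ ℝ :=
  TensorProduct.liftAddHom (BuHom u) (fun r f g => by
    simp only [map_zsmul, AddMonoidHom.smul_apply])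

lemma phiB_symsub (u : ℝ) {x : TensorProduct ℤ (Additive PD) (Additive PD)}
    (hx : x ∈ SymSub) : phiB u x = 0 := by
  have hle : SymSub ≤ (phiB u).ker := by
    rw [SymSub, AddSubgroup.closure_le]
    rintro t ⟨a, b, rfl⟩
    simp only [SetLike.mem_coe, AddMonoidHom.mem_ker, map_add,
      TensorProduct.liftAddHom_tmul, phiB]
    show Bu u a.toMul b.toMul + Bu u b.toMul a.toMul = 0
    unfold Bu; ring
  have := hle hx
  rwa [AddMonoidHom.mem_ker] at this

/-! ### Auxiliary analytic part -/

lemma abs_log_le (y : ℝ) (hy : 0 < y) : |Real.log y| ≤ 2 * ((Real.sqrt y)⁻¹ + Real.sqrt y) := by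
  have hs : 0 < Real.sqrt y := Real.sqrt_pos.2 hy
  have hlog : Real.log y = 2 * Real.log (Real.sqrt y) := by
    rw [Real.log_sqrt hy.le]; ring
  rw [hlog, abs_mul, abs_of_nonneg (by norm_num : (0:ℝ) ≤ 2)]
  have h1 : Real.log (Real.sqrt y) ≤ Real.sqrt y := by
    calc Real.log (Real.sqrt y) ≤ Real.sqrt y - 1 := Real.log_le_sub_one_of_pos hs
    _ ≤ Real.sqrt y := by linarith
  have h2 : -Real.log (Real.sqrt y) ≤ (Real.sqrt y)⁻¹ := by
    rw [← Real.log_inv]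
    calc Real.log (Real.sqrt y)⁻¹ ≤ (Real.sqrt y)⁻¹ - 1 :=
      Real.log_le_sub_one_of_pos (inv_pos.2 hs)
    _ ≤ (Real.sqrt y)⁻¹ := by linarith
  have hinv : 0 < (Real.sqrt y)⁻¹ := inv_pos.2 hs
  have h3 : |Real.log (Real.sqrt y)| ≤ (Real.sqrt y)⁻¹ + Real.sqrt y :=
    abs_le.2 ⟨by linarith, by linarith⟩
  linarith

/-- The integrand of `Ltil`. -/
noncomputable def gI (P : Polynomial ℝ) (y : ℝ) : ℝ :=
  Real.log (P.eval y) / y - Real.log y * P.derivative.eval y / P.eval y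

lemma gI_continuousAt (P : Polynomial ℝ) (hP1 : ∀ y : ℝ, 0 ≤ y → 1 ≤ P.eval y)
    {x : ℝ} (hx : 0 < x) : ContinuousAt (gI P) x := by
  have hPx : P.eval x ≠ 0 := by have := hP1 x hx.le; linarith
  have hc : ContinuousAt (fun y => P.eval y) x := P.continuous.continuousAt
  exact ((hc.log hPx).div continuousAt_id hx.ne').sub
    (((Real.continuousAt_log hx.ne').mul
      ((P.derivative).continuous.continuousAt)).div hc hPx)

lemma gI_continuousOn (P : Polynomial ℝ) (hP1 : ∀ y : ℝ, 0 ≤ y → 1 ≤ P.eval y) :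
    ContinuousOn (gI P) (Set.Ioi 0) := fun x hx =>
  (gI_continuousAt P hP1 hx).continuousWithinAt

lemma gI_intervalIntegrable (P : Polynomial ℝ) (hP1 : ∀ y : ℝ, 0 ≤ y → 1 ≤ P.eval y)
    (hc0 : P.coeff 0 = 1) {b : ℝ} (hb : 0 < b) :
    IntervalIntegrable (gI P) volume 0 b := by
  rw [intervalIntegrable_iff_integrableOn_Ioc_of_le hb.le]
  -- constants
  obtain ⟨M1, hM1⟩ := (isCompact_Icc (a := (0:ℝ)) (b := b)).exists_bound_of_continuousOn
    (P.divX.continuous.continuousOn)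
  obtain ⟨C, hC⟩ := (isCompact_Icc (a := (0:ℝ)) (b := b)).exists_bound_of_continuousOn
    ((P.derivative).continuous.continuousOn)
  have hC0 : 0 ≤ C := le_trans (norm_nonneg _) (hC 0 ⟨le_refl _, hb.le⟩)
  -- the dominating function
  set G : ℝ → ℝ := fun y => M1 + C * (2 * ((Real.sqrt y)⁻¹ + Real.sqrt y)) with hG
  have hGint : IntegrableOn G (Set.Ioc 0 b) volume := by
    apply Integrable.add (integrableOn_const measure_Ioc_lt_top.ne)
    apply Integrable.const_mul
    apply Integrable.const_mul
    apply Integrable.add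
    · have h12 : IntervalIntegrable (fun x : ℝ => x ^ (-(1/2) : ℝ)) volume 0 b :=
        intervalIntegral.intervalIntegrable_rpow' (by norm_num)
      rw [intervalIntegrable_iff_integrableOn_Ioc_of_le hb.le] at h12
      apply h12.congr_fun _ measurableSet_Ioc
      intro y hy
      show y ^ (-(1/2) : ℝ) = (Real.sqrt y)⁻¹
      rw [Real.rpow_neg hy.1.le, Real.sqrt_eq_rpow]
    · exact Real.continuous_sqrt.integrableOn_Ioc
  apply hGint.mono'
  · exact ((gI_continuousOn P hP1).mono (Set.Ioc_subset_Ioi_self)).aestronglyMeasurable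
      measurableSet_Ioc
  · filter_upwards [ae_restrict_mem measurableSet_Ioc] with y hy
    obtain ⟨hy0, hyb⟩ := hy
    have hPy : 1 ≤ P.eval y := hP1 y hy0.le
    have h1 : ‖Real.log (P.eval y) / y‖ ≤ M1 := by
      have hlogP : Real.log (P.eval y) ≤ P.divX.eval y * y := by
        have hPQ : P.eval y = P.divX.eval y * y + 1 := by
          conv_lhs => rw [← Polynomial.divX_mul_X_add P]
          simp [hc0]
        calc Real.log (P.eval y) ≤ P.eval y - 1 :=
          Real.log_le_sub_one_of_pos (by linarith)
        _ = P.divX.eval y * y := by rw [hPQ]; ring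
      have hnn : 0 ≤ Real.log (P.eval y) := Real.log_nonneg hPy
      rw [Real.norm_eq_abs, abs_of_nonneg (div_nonneg hnn hy0.le)]
      rw [div_le_iff₀ hy0]
      calc Real.log (P.eval y) ≤ P.divX.eval y * y := hlogP
      _ ≤ M1 * y := by
        have := hM1 y ⟨hy0.le, hyb⟩
        have : P.divX.eval y ≤ M1 := le_trans (le_abs_self _) this
        nlinarith
    have h2 : ‖Real.log y * P.derivative.eval y / P.eval y‖ ≤
        C * (2 * ((Real.sqrt y)⁻¹ + Real.sqrt y)) := by
      rw [Real.norm_eq_abs, abs_div, abs_mul]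
      have hPabs : 1 ≤ |P.eval y| := by rw [abs_of_pos (by linarith)]; exact hPy
      calc |Real.log y| * |P.derivative.eval y| / |P.eval y| ≤
          |Real.log y| * |P.derivative.eval y| := div_le_self (by positivity) hPabs
      _ ≤ (2 * ((Real.sqrt y)⁻¹ + Real.sqrt y)) * C := by
          apply mul_le_mul (abs_log_le y hy0) (hC y ⟨hy0.le, hyb⟩) (abs_nonneg _)
          have hs := Real.sqrt_pos.2 hy0
          positivity
      _ = C * (2 * ((Real.sqrt y)⁻¹ + Real.sqrt y)) := by ring
    calc ‖gI P y‖ ≤ ‖Real.log (P.eval y) / y‖ + ‖Real.log y * P.derivative.eval y / P.eval y‖ :=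
      norm_sub_le _ _
    _ ≤ M1 + C * (2 * ((Real.sqrt y)⁻¹ + Real.sqrt y)) := add_le_add h1 h2

lemma hasDerivAt_Ltil (P : Polynomial ℝ) (hP1 : ∀ y : ℝ, 0 ≤ y → 1 ≤ P.eval y)
    (hc0 : P.coeff 0 = 1) {x : ℝ} (hx : 0 < x) :
    HasDerivAt (Ltil P) ((1/2) * gI P x) x := by
  have hmeas : StronglyMeasurableAtFilter (gI P) (nhds x) volume :=
    ⟨Set.Ioi 0, isOpen_Ioi.mem_nhds hx,
      (gI_continuousOn P hP1).aestronglyMeasurable measurableSet_Ioi⟩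
  have h := intervalIntegral.integral_hasDerivAt_right
    (gI_intervalIntegrable P hP1 hc0 hx) hmeas (gI_continuousAt P hP1 hx)
  have h2 := h.const_mul (1/2 : ℝ)
  unfold Ltil
  exact h2

theorem higher_rogers_constancy
    (m : ℕ) (d : Fin m → ℕ) (hd : ∀ t, 1 ≤ d t)
    (z : Fin m → ℕ → ℝ)
    (hz0 : ∀ t, z t 0 = 1) (hzd : ∀ t, z t (d t) = 1)
    (hznn : ∀ t s, s ≤ d t → 0 ≤ z t s)
    (P : Fin m → Polynomial ℝ)
    (hP : ∀ t, P t = ∑ s ∈ Finset.range (d t + 1),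
      Polynomial.C (z t s) * Polynomial.X ^ s)
    (y Y : Fin m → PD)
    (hY : ∀ t, ∀ x : ℝ, (Y t).1 x = (P t).eval ((y t).1 x))
    (hwedge : QuotientAddGroup.mk' SymSub
      (∑ t, (Additive.ofMul (y t)) ⊗ₜ[ℤ] (Additive.ofMul (Y t))) = 0) :
    ∀ u ∈ Set.Icc (0:ℝ) 1, ∀ v ∈ Set.Icc (0:ℝ) 1,
      ∑ t, Ltil (P t) ((y t).1 u) = ∑ t, Ltil (P t) ((y t).1 v) := by
  -- basic facts on P t
  have hP1 : ∀ t, ∀ x : ℝ, 0 ≤ x → 1 ≤ (P t).eval x := by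
    intro t x hx
    rw [hP t]
    rw [Polynomial.eval_finset_sum]
    have h0mem : (0 : ℕ) ∈ Finset.range (d t + 1) := Finset.mem_range.2 (Nat.succ_pos _)
    have h1 : (1:ℝ) = Polynomial.eval x (Polynomial.C (z t 0) * Polynomial.X ^ 0) := by
      simp [hz0 t]
    rw [h1]
    refine Finset.single_le_sum
      (f := fun s => Polynomial.eval x (Polynomial.C (z t s) * Polynomial.X ^ s)) ?_ h0mem
    intro s hs
    simp only [Polynomial.eval_mul, Polynomial.eval_C, Polynomial.eval_pow, Polynomial.eval_X]
    exact mul_nonneg (hznn t s (Nat.lt_succ_iff.mp (Finset.mem_range.mp hs))) (pow_nonneg hx s)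
  have hc0 : ∀ t, (P t).coeff 0 = 1 := by
    intro t
    rw [Polynomial.coeff_zero_eq_eval_zero, hP t, Polynomial.eval_finset_sum]
    rw [Finset.sum_eq_single 0]
    · simp [hz0 t]
    · intro s _ hs
      simp [zero_pow hs]
    · intro h; exact absurd (Finset.mem_range.2 (Nat.succ_pos _)) h
  -- the wedge relation gives pointwise vanishing
  have hkey : ∀ u : ℝ, ∑ t, Bu u (y t) (Y t) = 0 := by
    intro u
    have hmem := (QuotientAddGroup.eq_zero_iff _).mp hwedge
    have := phiB_symsub u hmem
    rw [map_sum] at this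
    simpa only [phiB, TensorProduct.liftAddHom_tmul, BuHom_apply] using this
  -- derivative of each term
  have hder : ∀ t, ∀ u : ℝ,
      HasDerivAt (fun u => Ltil (P t) ((y t).1 u)) ((1/2) * Bu u (y t) (Y t)) u := by
    intro t u
    set yv := (y t).1 u with hyv
    have hyvpos : 0 < yv := (y t).2.1 u
    have hydiff : HasDerivAt (y t).1 (deriv (y t).1 u) u := ((y t).2.2 u).hasDerivAt
    have hL := (hasDerivAt_Ltil (P t) (hP1 t) (hc0 t) hyvpos).comp u hydiff
    have hYd : deriv (Y t).1 u = (P t).derivative.eval yv * deriv (y t).1 u := by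
      have hfun : (Y t).1 = fun x => (P t).eval ((y t).1 x) := funext (hY t)
      rw [hfun]
      exact (((P t).hasDerivAt yv).comp u hydiff).deriv
    have hval : (1/2) * gI (P t) yv * deriv (y t).1 u = (1/2) * Bu u (y t) (Y t) := by
      unfold Bu gI
      rw [hY t u, hYd, ← hyv]
      have hP0 : (P t).eval yv ≠ 0 := by have := hP1 t yv hyvpos.le; linarith
      field_simp
    rw [hval] at hL
    exact hL
  -- sum has zero derivative
  have hsum : ∀ u : ℝ, HasDerivAt (fun u => ∑ t, Ltil (P t) ((y t).1 u)) 0 u := by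
    intro u
    have h := HasDerivAt.fun_sum (u := Finset.univ) (fun t (_ : t ∈ Finset.univ) => hder t u)
    have : ∑ t, (1/2 : ℝ) * Bu u (y t) (Y t) = 0 := by
      rw [← Finset.mul_sum, hkey u, mul_zero]
    rwa [this] at h
  have hdiff : Differentiable ℝ (fun u => ∑ t, Ltil (P t) ((y t).1 u)) :=
    fun u => (hsum u).differentiableAt
  have hconst := is_const_of_deriv_eq_zero hdiff (fun u => (hsum u).deriv)
  intro u _ v _
  exact hconst u v
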